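/- arXiv:1208.2759 — 8 statements merged into one kernel-verified Lean document; each statement's English description precedes it below -/
import Mathlib

section
/- For any slope α ∈ [0,1] and intercept ρ ∈ ℝ, the Sturmian word s_{ρ,α} defined by s_{ρ,α}(n) = 0 iff (ρ + nα) mod 1 ∈ [0, 1−α) is balanced: for any two finite factors of s_{ρ,α} of the same length, the number of occurrences of the letter 0 in them differs by at most one. -/
/-- The Sturmian word of intercept `ρ` and slope `α`: letter `0` iff `(ρ + nα) mod 1 ∈ [0, 1-α)`. -/
noncomputable def sturm (ρ α : ℝ) (n : ℤ) : Fin 2 :=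
  if Int.fract (ρ + n * α) < 1 - α then 0 else 1

/-- Number of occurrences of the letter `0` in `u(p)…u(q)`. -/
noncomputable def zeroCount (u : ℤ → Fin 2) (p q : ℤ) : ℤ :=
  (((Finset.Icc p q).filter (fun i => u i = 0)).card : ℤ)

/-- The balance distance between `u` and `v` is at most one. -/
def distLE1 (u v : ℤ → Fin 2) : Prop :=
  ∀ p q : ℤ, p ≤ q → |zeroCount u p q - zeroCount v p q| ≤ 1

lemma floor_add_bounds (x β : ℝ) :
    ⌊β⌋ ≤ ⌊x + β⌋ - ⌊x⌋ ∧ ⌊x + β⌋ - ⌊x⌋ ≤ ⌊β⌋ + 1 := by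
  have h : ⌊x + β⌋ = ⌊x⌋ + ⌊Int.fract x + β⌋ := by
    conv_lhs => rw [← Int.floor_add_fract x]
    rw [add_assoc, Int.floor_intCast_add]
  have h1 : ⌊β⌋ ≤ ⌊Int.fract x + β⌋ :=
    Int.floor_le_floor (by nlinarith [Int.fract_nonneg x])
  have h2 : ⌊Int.fract x + β⌋ ≤ ⌊β⌋ + 1 := by
    have := Int.floor_le_floor (le_of_lt (by nlinarith [Int.fract_lt_one x] : Int.fract x + β < β + 1))
    rwa [Int.floor_add_one] at this
  omega

lemma sturm_indicator (ρ α : ℝ) (hα : α ∈ Set.Icc (0:ℝ) 1) (n : ℤ) :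
    (if sturm ρ α n = 0 then (1:ℤ) else 0)
      = 1 - (⌊ρ + ((n:ℝ)+1) * α⌋ - ⌊ρ + n * α⌋) := by
  obtain ⟨h0, h1⟩ := hα
  set x : ℝ := ρ + n * α with hx
  have hx1 : ρ + ((n:ℝ)+1) * α = x + α := by rw [hx]; ring
  have hfl : ⌊x + α⌋ = ⌊x⌋ + ⌊Int.fract x + α⌋ := by
    conv_lhs => rw [← Int.floor_add_fract x]
    rw [add_assoc, Int.floor_intCast_add]
  by_cases h : Int.fract x < 1 - α
  · have hs : sturm ρ α n = 0 := by unfold sturm; rw [← hx]; simp [h]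
    have he : ⌊Int.fract x + α⌋ = 0 := by
      rw [Int.floor_eq_zero_iff, Set.mem_Ico]
      exact ⟨add_nonneg (Int.fract_nonneg x) h0, by linarith⟩
    rw [if_pos hs, hx1, hfl, he]; ring
  · have hs : sturm ρ α n = 1 := by unfold sturm; rw [← hx]; simp [h]
    have he : ⌊Int.fract x + α⌋ = 1 := by
      rw [Int.floor_eq_iff]
      constructor
      · push_cast; linarith [not_lt.mp h]
      · push_cast; linarith [Int.fract_lt_one x]
    rw [if_neg (by rw [hs]; decide), hx1, hfl, he]; ring

lemma zeroCount_eq (ρ α : ℝ) (hα : α ∈ Set.Icc (0:ℝ) 1) (p : ℤ) (r : ℕ) :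
    zeroCount (sturm ρ α) p (p + r)
      = (r + 1 : ℤ) - (⌊ρ + ((p:ℝ) + r + 1) * α⌋ - ⌊ρ + p * α⌋) := by
  induction r with
  | zero =>
    simp only [Nat.cast_zero, add_zero, zeroCount, Finset.Icc_self,
      Finset.filter_singleton]
    have := sturm_indicator ρ α hα p
    split_ifs with h <;> simp [h] at this ⊢ <;> push_cast <;> linarith
  | succ r ih =>
    have hins : Finset.Icc p (p + (r + 1 : ℕ)) =
        insert (p + r + 1) (Finset.Icc p (p + r)) := by
      push_cast
      ext i
      simp only [Finset.mem_Icc, Finset.mem_insert]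
      omega
    have hnm : (p + r + 1) ∉ (Finset.Icc p (p + (r:ℤ))).filter
        (fun i => sturm ρ α i = 0) := by
      simp only [Finset.mem_filter, Finset.mem_Icc, not_and]
      intro h; omega
    have hcard : zeroCount (sturm ρ α) p (p + (r + 1 : ℕ))
        = zeroCount (sturm ρ α) p (p + r)
          + (if sturm ρ α (p + r + 1) = 0 then (1:ℤ) else 0) := by
      unfold zeroCount
      rw [hins, Finset.filter_insert]
      split_ifs with h
      · rw [Finset.card_insert_of_notMem hnm]; push_cast; ring
      · simp
    rw [hcard, ih, sturm_indicator ρ α hα (p + r + 1)]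
    push_cast
    ring_nf

/-- Sturmian words are balanced: any two factors of the same length have
numbers of occurrences of `0` differing by at most one. -/
theorem sturmian_balanced (ρ : ℝ) (α : ℝ) (hα : α ∈ Set.Icc (0:ℝ) 1) :
    ∀ (p q : ℤ) (r : ℕ),
      |zeroCount (sturm ρ α) p (p + r) - zeroCount (sturm ρ α) q (q + r)| ≤ 1 := by
  intro p q r
  rw [zeroCount_eq ρ α hα p r, zeroCount_eq ρ α hα q r]
  have hp : ρ + ((p:ℝ) + r + 1) * α = (ρ + p * α) + ((r:ℝ) + 1) * α := by ring
  have hq : ρ + ((q:ℝ) + r + 1) * α = (ρ + q * α) + ((r:ℝ) + 1) * α := by ring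
  rw [hp, hq]
  obtain ⟨hp1, hp2⟩ := floor_add_bounds (ρ + p * α) (((r:ℝ) + 1) * α)
  obtain ⟨hq1, hq2⟩ := floor_add_bounds (ρ + q * α) (((r:ℝ) + 1) * α)
  rw [abs_le]
  constructor <;> linarith
end

section
/- For any fixed α ∈ [0,1], n ∈ ℤ, and ρ, ρ' ∈ ℝ, the number of occurrences of 0 among s_{ρ,α}(p), …, s_{ρ,α}(q) and the number of occurrences of 0 among s_{ρ',α}(p), …, s_{ρ',α}(q) differ by at most 1, for all integers p ≤ q. That is, two Sturmian words with the same slope are at distance at most one in the balance metric d(u,v) = sup_{p≤q} ||u(p)…u(q)|₀ − |v(p)…v(q)|₀|. -/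
lemma sturm_floor (ρ α : ℝ) (hα0 : 0 ≤ α) (hα1 : α ≤ 1) (n : ℤ) :
    (if sturm ρ α n = 0 then (1:ℤ) else 0)
      = 1 - (⌊ρ + ((n:ℝ)+1)*α⌋ - ⌊ρ + (n:ℝ)*α⌋) := by
  have hx : ρ + ((n:ℝ)+1)*α = (ρ + n*α) + α := by ring
  rw [hx]
  set x := ρ + (n:ℝ)*α with hxdef
  have hfr : Int.fract x = x - ⌊x⌋ := rfl
  by_cases h : Int.fract x < 1 - α
  · have hs : sturm ρ α n = 0 := by simp [sturm, ← hxdef, h]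
    rw [if_pos hs]
    have h1 : ⌊x + α⌋ < ⌊x⌋ + 1 := by
      rw [Int.floor_lt]
      push_cast
      rw [hfr] at h; linarith
    have h2 : ⌊x⌋ ≤ ⌊x + α⌋ := Int.floor_le_floor (by linarith)
    omega
  · have hs : ¬ sturm ρ α n = 0 := by simp [sturm, ← hxdef, h]
    rw [if_neg hs]
    push_neg at h
    have h1 : ⌊x⌋ + 1 ≤ ⌊x + α⌋ := by
      rw [Int.le_floor]
      push_cast
      rw [hfr] at h; linarith
    have h2 : ⌊x + α⌋ < ⌊x⌋ + 2 := by
      rw [Int.floor_lt]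
      push_cast
      linarith [Int.lt_floor_add_one x]
    omega

lemma zc_eq (ρ α : ℝ) (hα0 : 0 ≤ α) (hα1 : α ≤ 1) (p : ℤ) :
    ∀ q : ℤ, p ≤ q → zeroCount (sturm ρ α) p q
      = (q + 1 - p) - (⌊ρ + ((q:ℝ)+1)*α⌋ - ⌊ρ + (p:ℝ)*α⌋) := by
  refine Int.le_induction ?_ ?_
  ·
    have := sturm_floor ρ α hα0 hα1 p
    unfold zeroCount
    rw [Finset.Icc_self, Finset.filter_singleton]
    split <;> rename_i hs <;> simp [hs] at this ⊢ <;> omega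
  · intro q hq ih
    have hins : Finset.Icc p (q+1) = insert (q+1) (Finset.Icc p q) := by
      ext x; simp only [Finset.mem_Icc, Finset.mem_insert]; omega
    have hstep := sturm_floor ρ α hα0 hα1 (q+1)
    unfold zeroCount at ih ⊢
    rw [hins, Finset.filter_insert]
    push_cast at hstep ⊢
    split <;> rename_i hs <;> simp [hs] at hstep
    · rw [Finset.card_insert_of_notMem (by simp)]
      push_cast
      omega
    · omega

/-- Two Sturmian words with the same slope are at balance distance at most one. -/
theorem sturmian_same_slope_distLE1 (α : ℝ) (hα : α ∈ Set.Icc (0:ℝ) 1) (ρ ρ' : ℝ) :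
    distLE1 (sturm ρ α) (sturm ρ' α) := by
  obtain ⟨hα0, hα1⟩ := hα
  intro p q hpq
  rw [zc_eq ρ α hα0 hα1 p q hpq, zc_eq ρ' α hα0 hα1 p q hpq]
  have key : ∀ x : ℝ, ρ' - ρ - 1 < ((⌊ρ' + x⌋ - ⌊ρ + x⌋ : ℤ) : ℝ)
      ∧ ((⌊ρ' + x⌋ - ⌊ρ + x⌋ : ℤ) : ℝ) < ρ' - ρ + 1 := by
    intro x
    push_cast
    constructor
    · linarith [Int.sub_one_lt_floor (ρ' + x), Int.floor_le (ρ + x)]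
    · linarith [Int.floor_le (ρ' + x), Int.sub_one_lt_floor (ρ + x)]
  obtain ⟨h1, h2⟩ := key (((q:ℝ)+1)*α)
  obtain ⟨h3, h4⟩ := key ((p:ℝ)*α)
  set A := ⌊ρ' + ((q:ℝ)+1)*α⌋ - ⌊ρ + ((q:ℝ)+1)*α⌋ with hA
  set B := ⌊ρ' + (p:ℝ)*α⌋ - ⌊ρ + (p:ℝ)*α⌋ with hB
  have hAB : |((A - B : ℤ) : ℝ)| < 2 := by
    rw [abs_lt]; push_cast; constructor <;> linarith
  have : |A - B| ≤ 1 := by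
    have : ((|A - B| : ℤ) : ℝ) < 2 := by rw [Int.cast_abs]; exact hAB
    exact_mod_cast by exact_mod_cast Int.lt_add_one_iff.mp (by exact_mod_cast this)
  calc |_| = |A - B| := by congr 1; rw [hA, hB]; ring
       _ ≤ 1 := this
end

section
/- Let u, v : ℤ → {0,1} with d(u,v) ≤ 1, where d is the balance metric. Let D = {i ∈ ℤ : u(i) ≠ v(i)} be the set of positions where u and v differ. Then no two consecutive elements of D (i.e., p < q in D with no element of D strictly between them) have the same replacement type, where the replacement type at position i is the pair (u(i), v(i)). -/
lemma zeroCount_sub (u v : ℤ → Fin 2) (p q : ℤ) :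
    zeroCount u p q - zeroCount v p q =
      ∑ i ∈ Finset.Icc p q,
        ((if u i = 0 then (1 : ℤ) else 0) - (if v i = 0 then 1 else 0)) := by
  unfold zeroCount
  rw [Finset.sum_sub_distrib, Finset.card_filter, Finset.card_filter]
  push_cast
  ring

/-- If `d(u,v) ≤ 1`, then two consecutive positions where `u` and `v` differ carry
replacements of different types. -/
theorem consecutive_replacements_alternate (u v : ℤ → Fin 2) (h : distLE1 u v)
    (p q : ℤ) (hpq : p < q) (hp : u p ≠ v p) (hq : u q ≠ v q)
    (hbetween : ∀ i : ℤ, p < i → i < q → u i = v i) :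
    (u p, v p) ≠ (u q, v q) := by
  intro heq
  have hup : u p = u q := congrArg Prod.fst heq
  have hvp : v p = v q := congrArg Prod.snd heq
  set F : ℤ → ℤ := fun i => (if u i = 0 then (1 : ℤ) else 0) - (if v i = 0 then 1 else 0)
    with hF
  have hsub : ({p, q} : Finset ℤ) ⊆ Finset.Icc p q := by
    intro x hx
    simp only [Finset.mem_insert, Finset.mem_singleton] at hx
    rcases hx with rfl | rfl <;> simp [Finset.mem_Icc, hpq.le]
  have hzero : ∀ x ∈ Finset.Icc p q, x ∉ ({p, q} : Finset ℤ) → F x = 0 := by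
    intro x hxIcc hxnot
    simp only [Finset.mem_insert, Finset.mem_singleton, not_or] at hxnot
    simp only [Finset.mem_Icc] at hxIcc
    have huv : u x = v x := hbetween x (lt_of_le_of_ne hxIcc.1 (Ne.symm hxnot.1))
      (lt_of_le_of_ne hxIcc.2 hxnot.2)
    simp [hF, huv]
  have hsum : zeroCount u p q - zeroCount v p q = F p + F q := by
    rw [zeroCount_sub u v p q, ← Finset.sum_subset hsub hzero,
      Finset.sum_pair hpq.ne]
  have h2 : ∀ x : Fin 2, x = 0 ∨ x = 1 := by decide
  have hbd := h p q hpq.le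
  rw [hsum] at hbd
  have hFq : F q = F p := by simp [hF, ← hup, ← hvp]
  rw [hFq] at hbd
  rcases h2 (u p) with h1 | h1 <;> rcases h2 (v p) with h2' | h2' <;>
    simp [hF, h1, h2'] at hp hbd
end

section
/- Let u, v : ℤ → {0,1} and let D = {i ∈ ℤ : u(i) ≠ v(i)}. Suppose that for any two consecutive positions p < q in D (no element of D strictly between them), the replacement types at p and q differ (one is 0→1 and the other is 1→0). Then d(u,v) ≤ 1 in the balance metric. -/
lemma Icc_insert_top (p q : ℤ) (h : p ≤ q + 1) :
    Finset.Icc p (q + 1) = insert (q + 1) (Finset.Icc p q) := by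
  ext i; simp only [Finset.mem_Icc, Finset.mem_insert]; omega

/-- If the replacement types at consecutive differing positions always alternate,
then `d(u,v) ≤ 1`. -/
theorem distLE1_of_alternating (u v : ℤ → Fin 2)
    (h : ∀ p q : ℤ, p < q → u p ≠ v p → u q ≠ v q →
      (∀ i : ℤ, p < i → i < q → u i = v i) → (u p, v p) ≠ (u q, v q)) :
    distLE1 u v := by
  intro p q hpq
  set f : ℤ → ℤ := fun i => (if u i = 0 then (1:ℤ) else 0) - (if v i = 0 then 1 else 0)
    with hfdef
  have fin2 : ∀ a : Fin 2, a = 0 ∨ a = 1 := by decide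
  have hf0 : ∀ i, f i = 0 ↔ u i = v i := by
    intro i
    rcases fin2 (u i) with h1 | h1 <;> rcases fin2 (v i) with h2 | h2 <;>
      simp [hfdef, h1, h2]
  have hf1 : ∀ i, f i = 1 ↔ (u i = 0 ∧ v i = 1) := by
    intro i
    rcases fin2 (u i) with h1 | h1 <;> rcases fin2 (v i) with h2 | h2 <;>
      simp [hfdef, h1, h2]
  have hfm1 : ∀ i, f i = -1 ↔ (u i = 1 ∧ v i = 0) := by
    intro i
    rcases fin2 (u i) with h1 | h1 <;> rcases fin2 (v i) with h2 | h2 <;>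
      simp [hfdef, h1, h2]
  have hfr : ∀ i, f i = -1 ∨ f i = 0 ∨ f i = 1 := by
    intro i
    rcases fin2 (u i) with h1 | h1 <;> rcases fin2 (v i) with h2 | h2 <;>
      simp [hfdef, h1, h2]
  have key : ∀ r : ℤ, p ≤ r →
      (|∑ i ∈ Finset.Icc p r, f i| ≤ 1 ∧
        (∑ i ∈ Finset.Icc p r, f i = 1 →
          ∃ j, p ≤ j ∧ j ≤ r ∧ f j = 1 ∧ ∀ i, j < i → i ≤ r → f i = 0) ∧
        (∑ i ∈ Finset.Icc p r, f i = -1 →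
          ∃ j, p ≤ j ∧ j ≤ r ∧ f j = -1 ∧ ∀ i, j < i → i ≤ r → f i = 0)) := by
    intro r
    refine Int.le_induction (motive := fun r _ =>
      |∑ i ∈ Finset.Icc p r, f i| ≤ 1 ∧
        (∑ i ∈ Finset.Icc p r, f i = 1 →
          ∃ j, p ≤ j ∧ j ≤ r ∧ f j = 1 ∧ ∀ i, j < i → i ≤ r → f i = 0) ∧
        (∑ i ∈ Finset.Icc p r, f i = -1 →
          ∃ j, p ≤ j ∧ j ≤ r ∧ f j = -1 ∧ ∀ i, j < i → i ≤ r → f i = 0)) ?_ ?_ r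
    ·
      simp only [Finset.Icc_self, Finset.sum_singleton]
      refine ⟨?_, ?_, ?_⟩
      · rcases hfr p with h1|h1|h1 <;> simp [h1]
      · intro hs; exact ⟨p, le_refl p, le_refl p, hs, fun i hi1 hi2 => absurd hi2 (not_le.mpr hi1)⟩
      · intro hs; exact ⟨p, le_refl p, le_refl p, hs, fun i hi1 hi2 => absurd hi2 (not_le.mpr hi1)⟩
    · intro r hr ih
      obtain ⟨ih1, ih2, ih3⟩ := ih
      have ihb := abs_le.mp ih1
      have hnotmem : (r + 1) ∉ Finset.Icc p r := by simp
      have hsum : ∑ i ∈ Finset.Icc p (r+1), f i = f (r+1) + ∑ i ∈ Finset.Icc p r, f i := by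
        rw [Icc_insert_top p r (by omega), Finset.sum_insert hnotmem]
      -- contradiction helper: the sum can't keep sign with same replacement type
      rcases hfr (r+1) with hq1|hq1|hq1
      · -- f (r+1) = -1 : need old sum ≠ -1
        have hold : ∑ i ∈ Finset.Icc p r, f i ≠ -1 := by
          intro hS
          obtain ⟨j, hj1, hj2, hj3, hj4⟩ := ih3 hS
          obtain ⟨huj, hvj⟩ := (hfm1 j).mp hj3
          obtain ⟨huq, hvq⟩ := (hfm1 (r+1)).mp hq1
          exact h j (r+1) (by omega) (by rw [huj, hvj]; decide) (by rw [huq, hvq]; decide)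
            (fun i hi1 hi2 => (hf0 i).mp (hj4 i hi1 (by omega)))
            (by rw [huj, hvj, huq, hvq])
        refine ⟨by rw [hsum, abs_le]; omega, ?_, ?_⟩
        · intro hs; exfalso; rw [hsum] at hs; omega
        · intro hs
          exact ⟨r+1, by omega, le_refl _, hq1, fun i hi1 hi2 => absurd hi2 (not_le.mpr hi1)⟩
      · refine ⟨by rw [hsum, abs_le]; omega, ?_, ?_⟩
        · intro hs
          obtain ⟨j, hj1, hj2, hj3, hj4⟩ := ih2 (by omega)
          exact ⟨j, hj1, by omega, hj3, fun i hi1 hi2 => by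
            rcases eq_or_lt_of_le hi2 with hi3 | hi3
            · rw [hi3]; exact hq1
            · exact hj4 i hi1 (by omega)⟩
        · intro hs
          obtain ⟨j, hj1, hj2, hj3, hj4⟩ := ih3 (by omega)
          exact ⟨j, hj1, by omega, hj3, fun i hi1 hi2 => by
            rcases eq_or_lt_of_le hi2 with hi3 | hi3
            · rw [hi3]; exact hq1
            · exact hj4 i hi1 (by omega)⟩
      · -- f (r+1) = 1 : need old sum ≠ 1
        have hold : ∑ i ∈ Finset.Icc p r, f i ≠ 1 := by
          intro hS
          obtain ⟨j, hj1, hj2, hj3, hj4⟩ := ih2 hS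
          obtain ⟨huj, hvj⟩ := (hf1 j).mp hj3
          obtain ⟨huq, hvq⟩ := (hf1 (r+1)).mp hq1
          exact h j (r+1) (by omega) (by rw [huj, hvj]; decide) (by rw [huq, hvq]; decide)
            (fun i hi1 hi2 => (hf0 i).mp (hj4 i hi1 (by omega)))
            (by rw [huj, hvj, huq, hvq])
        refine ⟨by rw [hsum, abs_le]; omega, ?_, ?_⟩
        · intro hs
          exact ⟨r+1, by omega, le_refl _, hq1, fun i hi1 hi2 => absurd hi2 (not_le.mpr hi1)⟩
        · intro hs; exfalso; rw [hsum] at hs; omega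
  have hzc : ∀ w : ℤ → Fin 2, zeroCount w p q
      = ∑ i ∈ Finset.Icc p q, (if w i = 0 then (1:ℤ) else 0) := by
    intro w
    unfold zeroCount
    rw [Finset.card_filter]
    push_cast [apply_ite]
    rfl
  have : zeroCount u p q - zeroCount v p q = ∑ i ∈ Finset.Icc p q, f i := by
    rw [hzc u, hzc v, ← Finset.sum_sub_distrib]
  rw [this]
  exact (key q hpq).1
end

section
/- Two bi-infinite words u, v : ℤ → {0,1} satisfy d(u,v) ≤ 1 (balance metric) if and only if v can be obtained from u by performing letter replacements 0→1 or 1→0 such that no two consecutive replacements (in position order) have the same type. -/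
/-- Pointwise difference of zero-indicators. -/
def fdiff (u v : ℤ → Fin 2) (i : ℤ) : ℤ :=
  (if u i = 0 then 1 else 0) - (if v i = 0 then 1 else 0)

lemma fdiff_eq_zero_iff (u v : ℤ → Fin 2) (i : ℤ) : fdiff u v i = 0 ↔ u i = v i := by
  unfold fdiff
  rcases (by omega : (u i : Fin 2).val = 0 ∨ (u i).val = 1) with h | h <;>
  rcases (by omega : (v i : Fin 2).val = 0 ∨ (v i).val = 1) with h' | h' <;>
    simp_all [Fin.ext_iff, -Fin.val_eq_zero_iff]

lemma fdiff_mem (u v : ℤ → Fin 2) (i : ℤ) :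
    fdiff u v i = -1 ∨ fdiff u v i = 0 ∨ fdiff u v i = 1 := by
  unfold fdiff; split <;> split <;> simp

lemma fdiff_eq_of_pair_eq (u v : ℤ → Fin 2) {i j : ℤ}
    (h : (u i, v i) = (u j, v j)) : fdiff u v i = fdiff u v j := by
  unfold fdiff
  rw [Prod.mk.injEq] at h
  rw [h.1, h.2]

lemma pair_eq_of_fdiff_eq (u v : ℤ → Fin 2) {i j : ℤ}
    (hne : fdiff u v i ≠ 0) (h : fdiff u v i = fdiff u v j) :
    (u i, v i) = (u j, v j) := by
  unfold fdiff at hne h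
  rcases (by omega : (u i : Fin 2).val = 0 ∨ (u i).val = 1) with h1 | h1 <;>
  rcases (by omega : (v i : Fin 2).val = 0 ∨ (v i).val = 1) with h2 | h2 <;>
  rcases (by omega : (u j : Fin 2).val = 0 ∨ (u j).val = 1) with h3 | h3 <;>
  rcases (by omega : (v j : Fin 2).val = 0 ∨ (v j).val = 1) with h4 | h4 <;>
    simp_all [Fin.ext_iff, -Fin.val_eq_zero_iff] <;> omega

lemma zc_sub (u v : ℤ → Fin 2) (p q : ℤ) :
    zeroCount u p q - zeroCount v p q = ∑ i ∈ Finset.Icc p q, fdiff u v i := by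
  unfold zeroCount fdiff
  rw [Finset.card_filter, Finset.card_filter]
  push_cast
  rw [← Finset.sum_sub_distrib]

lemma Icc_succ (p q : ℤ) (h : p ≤ q + 1) :
    Finset.Icc p (q+1) = insert (q+1) (Finset.Icc p q) := by
  ext i; simp [Finset.mem_Icc]; omega

/-- Key structural lemma for the backward direction. -/
lemma key (u v : ℤ → Fin 2)
    (halt : ∀ p q : ℤ, p < q → u p ≠ v p → u q ≠ v q →
        (∀ i : ℤ, p < i → i < q → u i = v i) → (u p, v p) ≠ (u q, v q))
    (p : ℤ) : ∀ n : ℕ,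
    (∑ i ∈ Finset.Icc p (p + n), fdiff u v i) = 0 ∨
    ∃ j, p ≤ j ∧ j ≤ p + n ∧ fdiff u v j ≠ 0 ∧
      fdiff u v j = (∑ i ∈ Finset.Icc p (p + n), fdiff u v i) ∧
      ∀ i, j < i → i ≤ p + n → fdiff u v i = 0 := by
  intro n
  induction n with
  | zero =>
    simp only [Nat.cast_zero, add_zero, Finset.Icc_self, Finset.sum_singleton]
    rcases eq_or_ne (fdiff u v p) 0 with h | h
    · exact Or.inl h
    · exact Or.inr ⟨p, le_refl p, le_refl p, h, rfl, fun i h1 h2 => absurd (le_antisymm h2 h1.le) (by omega)⟩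
  | succ n ih =>
    have hq : p + (n + 1 : ℕ) = (p + n) + 1 := by push_cast; ring
    rw [hq, Icc_succ p (p + n) (by omega), Finset.sum_insert (by simp)]
    rcases eq_or_ne (fdiff u v ((p + n) + 1)) 0 with hz | hz
    · rw [hz, zero_add]
      rcases ih with h0 | ⟨j, hj1, hj2, hjne, hj3, hj4⟩
      · exact Or.inl h0
      · exact Or.inr ⟨j, hj1, by omega, hjne, hj3, fun i h1 h2 => by
          rcases eq_or_lt_of_le h2 with h | h
          · rw [h]; exact hz
          · exact hj4 i h1 (by omega)⟩
    · rcases ih with h0 | ⟨j, hj1, hj2, hjne, hj3, hj4⟩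
      · rw [h0, add_zero]
        exact Or.inr ⟨(p + n) + 1, by omega, le_refl _, hz, rfl,
          fun i h1 h2 => absurd (le_antisymm h2 h1.le) (by omega)⟩
      · -- j and p+n+1 are consecutive differences
        have hune : u j ≠ v j := fun h => hjne ((fdiff_eq_zero_iff u v j).2 h)
        have hune' : u ((p+n)+1) ≠ v ((p+n)+1) :=
          fun h => hz ((fdiff_eq_zero_iff u v _).2 h)
        have hmid : ∀ i : ℤ, j < i → i < (p+n)+1 → u i = v i := fun i h1 h2 =>
          (fdiff_eq_zero_iff u v i).1 (hj4 i h1 (by omega))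
        have hpair := halt j ((p+n)+1) (by omega) hune hune' hmid
        have : fdiff u v j ≠ fdiff u v ((p+n)+1) := fun h =>
          hpair (pair_eq_of_fdiff_eq u v hjne h)
        have hsum : fdiff u v ((p+n)+1) + fdiff u v j = 0 := by
          rcases fdiff_mem u v j with h | h | h <;>
          rcases fdiff_mem u v ((p+n)+1) with h' | h' | h' <;> omega
        rw [← hj3, hsum]
        exact Or.inl rfl

/-- `d(u,v) ≤ 1` iff `v` is obtained from `u` by replacements whose types alternate. -/
theorem distLE1_iff_alternating (u v : ℤ → Fin 2) :
    distLE1 u v ↔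
      ∀ p q : ℤ, p < q → u p ≠ v p → u q ≠ v q →
        (∀ i : ℤ, p < i → i < q → u i = v i) → (u p, v p) ≠ (u q, v q) := by
  constructor
  · intro hd p q hpq hup huq hmid hpair
    have hfp : fdiff u v p ≠ 0 := fun h => hup ((fdiff_eq_zero_iff u v p).1 h)
    have hfq : fdiff u v p = fdiff u v q := fdiff_eq_of_pair_eq u v hpair
    have hsum : ∑ i ∈ Finset.Icc p q, fdiff u v i = fdiff u v p + fdiff u v q := by
      rw [← Finset.sum_pair (by omega : p ≠ q)]
      symm
      apply Finset.sum_subset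
      · intro x hx
        simp only [Finset.mem_insert, Finset.mem_singleton] at hx
        rcases hx with h | h <;> simp [Finset.mem_Icc, h] <;> omega
      · intro x hx hnx
        simp only [Finset.mem_insert, Finset.mem_singleton, not_or] at hnx
        simp only [Finset.mem_Icc] at hx
        exact (fdiff_eq_zero_iff u v x).2 (hmid x (by omega) (by omega))
    have := hd p q (by omega)
    rw [zc_sub, hsum, ← hfq] at this
    rcases fdiff_mem u v p with h | h | h <;> simp [h] at this hfp <;> omega
  · intro halt p q hpq
    rw [zc_sub]
    obtain ⟨n, hn⟩ : ∃ n : ℕ, q = p + n := ⟨(q - p).toNat, by omega⟩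
    subst hn
    rcases key u v halt p n with h | ⟨j, _, _, _, hj3, _⟩
    · rw [h]; norm_num
    · rw [← hj3]
      rcases fdiff_mem u v j with h | h | h <;> rw [h] <;> norm_num
end

section
/- Let u, v : ℤ → {0,1} with d(u,v) ≤ 1 and u ≠ v. Then there exists a unique word w : ℤ → {0,1} encoding the replacements transforming u into v, in the sense that: for every i ∈ ℤ, u(i) ≠ v(i) if and only if w(i) ≠ w(i+1), and moreover whenever u(i) ≠ v(i), one has w(i) = u(i) and w(i+1) = v(i). -/
namespace CodingAux

lemma fin2_cases (a : Fin 2) : a = 0 ∨ a = 1 := by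
  match a with
  | 0 => exact .inl rfl
  | 1 => exact .inr rfl

/-- Indicator of the letter `0`. -/
def ind (u : ℤ → Fin 2) (i : ℤ) : ℤ := if u i = 0 then 1 else 0

lemma zeroCount_single (u : ℤ → Fin 2) (i : ℤ) : zeroCount u i i = ind u i := by
  simp only [zeroCount, ind, Finset.Icc_self, Finset.filter_singleton]
  split <;> simp

lemma zeroCount_empty (u : ℤ → Fin 2) (p q : ℤ) (h : q < p) : zeroCount u p q = 0 := by
  simp [zeroCount, Finset.Icc_eq_empty_of_lt h]

lemma zeroCount_succ (u : ℤ → Fin 2) (p q : ℤ) (h : p ≤ q + 1) :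
    zeroCount u p (q + 1) = zeroCount u p q + ind u (q + 1) := by
  have hicc : Finset.Icc p (q + 1) = insert (q + 1) (Finset.Icc p q) := by
    ext x; simp only [Finset.mem_Icc, Finset.mem_insert]; omega
  have hnm : (q + 1) ∉ Finset.Icc p q := by simp
  rw [zeroCount, hicc, Finset.filter_insert]
  unfold ind
  split
  · rw [Finset.card_insert_of_notMem (fun hx => hnm (Finset.mem_of_mem_filter _ hx))]
    push_cast [zeroCount]; ring
  · simp [zeroCount]

lemma zeroCount_pred (u : ℤ → Fin 2) (p q : ℤ) (h : p ≤ q) :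
    zeroCount u p q = ind u p + zeroCount u (p + 1) q := by
  have hicc : Finset.Icc p q = insert p (Finset.Icc (p + 1) q) := by
    ext x; simp only [Finset.mem_Icc, Finset.mem_insert]; omega
  have hnm : p ∉ Finset.Icc (p + 1) q := by simp
  rw [zeroCount, hicc, Finset.filter_insert]
  unfold ind
  split
  · rw [Finset.card_insert_of_notMem (fun hx => hnm (Finset.mem_of_mem_filter _ hx))]
    push_cast [zeroCount]; ring
  · simp [zeroCount]

/-- Difference of zero-counts. -/
noncomputable def zdiff (u v : ℤ → Fin 2) (p q : ℤ) : ℤ := zeroCount u p q - zeroCount v p q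

/-- The one-letter difference. -/
def delta (u v : ℤ → Fin 2) (i : ℤ) : ℤ := ind u i - ind v i

lemma zdiff_single (u v : ℤ → Fin 2) (i : ℤ) : zdiff u v i i = delta u v i := by
  simp [zdiff, delta, zeroCount_single]

lemma zdiff_succ (u v : ℤ → Fin 2) (p q : ℤ) (h : p ≤ q + 1) :
    zdiff u v p (q + 1) = zdiff u v p q + delta u v (q + 1) := by
  simp only [zdiff, delta, zeroCount_succ _ _ _ h]; ring

lemma zdiff_pred (u v : ℤ → Fin 2) (p q : ℤ) (h : p ≤ q) :
    zdiff u v p q = delta u v p + zdiff u v (p + 1) q := by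
  simp only [zdiff, delta, zeroCount_pred _ _ _ h]; ring

/-- The cumulative difference function based at `i0`. -/
noncomputable def g (u v : ℤ → Fin 2) (i0 i : ℤ) : ℤ :=
  if i0 ≤ i then zdiff u v i0 (i - 1) else -(zdiff u v i (i0 - 1))

lemma g_base (u v : ℤ → Fin 2) (i0 : ℤ) : g u v i0 i0 = 0 := by
  simp [g, zdiff, zeroCount_empty _ _ _ (by omega : i0 - 1 < i0)]

lemma g_succ (u v : ℤ → Fin 2) (i0 i : ℤ) :
    g u v i0 (i + 1) = g u v i0 i + delta u v i := by
  rcases le_or_gt i0 i with hi | hi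
  · have h1 : i0 ≤ i + 1 := by omega
    simp only [g, if_pos hi, if_pos h1]
    have := zdiff_succ u v i0 (i - 1) (by omega)
    simpa [show i - 1 + 1 = i from by omega, show i + 1 - 1 = i from by omega] using this
  · rcases eq_or_lt_of_le (by omega : i + 1 ≤ i0) with he | hlt
    · subst he
      have hgl : g u v (i + 1) i = -(delta u v i) := by
        simp only [g, if_neg (by omega : ¬ i + 1 ≤ i)]
        rw [show i + 1 - 1 = i from by omega, zdiff_single]
      rw [g_base, hgl]
      ring
    · simp only [g, if_neg (by omega : ¬ i0 ≤ i), if_neg (by omega : ¬ i0 ≤ i + 1)]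
      have := zdiff_pred u v i (i0 - 1) (by omega)
      omega

lemma g_diff (u v : ℤ → Fin 2) (i0 i j : ℤ) (hij : i < j) :
    g u v i0 j = g u v i0 i + zdiff u v i (j - 1) := by
  have : ∀ j : ℤ, i + 1 ≤ j → g u v i0 j = g u v i0 i + zdiff u v i (j - 1) := by
    refine Int.le_induction ?_ ?_
    · rw [g_succ, show i + 1 - 1 = i from by omega, zdiff_single]
    · intro k hk ih
      rw [g_succ, ih, show k + 1 - 1 = k from by omega,
        show k = (k - 1) + 1 from by omega, zdiff_succ u v i (k-1) (by omega)]
      ring_nf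
  exact this j hij

lemma g_close (u v : ℤ → Fin 2) (h : distLE1 u v) (i0 i j : ℤ) :
    |g u v i0 i - g u v i0 j| ≤ 1 := by
  rcases lt_trichotomy i j with hij | hij | hij
  · have := g_diff u v i0 i j hij
    have hb := h i (j - 1) (by omega)
    simp only [zdiff] at this
    rw [abs_le] at hb ⊢
    omega
  · simp [hij]
  · have := g_diff u v i0 j i hij
    have hb := h j (i - 1) (by omega)
    simp only [zdiff] at this
    rw [abs_le] at hb ⊢
    omega

lemma delta_ne_zero_iff (u v : ℤ → Fin 2) (i : ℤ) : delta u v i ≠ 0 ↔ u i ≠ v i := by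
  rcases fin2_cases (u i) with h1 | h1 <;> rcases fin2_cases (v i) with h2 | h2 <;>
    simp [delta, ind, h1, h2]

end CodingAux

open CodingAux

/-- If `d(u,v) ≤ 1` and `u ≠ v`, the word coding the replacements transforming
`u` into `v` exists and is unique. -/
theorem coding_exists_unique (u v : ℤ → Fin 2) (h : distLE1 u v) (hne : u ≠ v) :
    ∃! w : ℤ → Fin 2,
      (∀ i : ℤ, (u i ≠ v i ↔ w i ≠ w (i + 1))) ∧
      (∀ i : ℤ, u i ≠ v i → w i = u i ∧ w (i + 1) = v i) := by
  obtain ⟨i0, hi0⟩ : ∃ i, u i ≠ v i := Function.ne_iff.mp hne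
  have hd0 : delta u v i0 ≠ 0 := (delta_ne_zero_iff u v i0).mpr hi0
  have hdelta_mem : ∀ i, delta u v i = -1 ∨ delta u v i = 0 ∨ delta u v i = 1 := by
    intro i
    rcases fin2_cases (u i) with h1 | h1 <;> rcases fin2_cases (v i) with h2 | h2 <;>
      simp [delta, ind, h1, h2]
  set m : ℤ := min ((g u v i0) i0) ((g u v i0) (i0 + 1)) with hm
  -- all values of (g u v i0) are m or m+1
  have hsucc0 : (g u v i0) (i0 + 1) = (g u v i0) i0 + delta u v i0 := g_succ u v i0 i0
  have hpair : ((g u v i0) i0 = m ∧ (g u v i0) (i0+1) = m + 1) ∨ ((g u v i0) i0 = m + 1 ∧ (g u v i0) (i0+1) = m) := by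
    rcases hdelta_mem i0 with hd | hd | hd
    · right; rw [hm]; omega
    · exact absurd hd hd0
    · left; rw [hm]; omega
  have hrange : ∀ i, (g u v i0) i = m ∨ (g u v i0) i = m + 1 := by
    intro i
    have h1 := g_close u v h i0 i i0
    have h2 := g_close u v h i0 i (i0 + 1)
    rw [abs_le] at h1 h2
    omega
  set w : ℤ → Fin 2 := fun i => if (g u v i0) i = m then 0 else 1 with hw
  have hwval : ∀ i, ((g u v i0) i = m → w i = 0) ∧ ((g u v i0) i = m + 1 → w i = 1) := by
    intro i
    constructor
    · intro hgi; simp [hw, hgi]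
    · intro hgi; simp [hw, hgi]
  have hwne : ∀ i, w i ≠ w (i + 1) ↔ (g u v i0) i ≠ (g u v i0) (i + 1) := by
    intro i
    constructor
    · intro hww
      intro hgg
      exact hww (by simp [hw, hgg])
    · intro hgg hww
      rcases hrange i with h1 | h1 <;> rcases hrange (i+1) with h2 | h2
      · exact hgg (h1.trans h2.symm)
      · rw [(hwval i).1 h1, (hwval (i+1)).2 h2] at hww; exact absurd hww (by decide)
      · rw [(hwval i).2 h1, (hwval (i+1)).1 h2] at hww; exact absurd hww (by decide)
      · exact hgg (h1.trans h2.symm)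
  have hGne : ∀ i, (g u v i0) i ≠ (g u v i0) (i + 1) ↔ u i ≠ v i := by
    intro i
    have := g_succ u v i0 i
    rw [← delta_ne_zero_iff u v i]
    constructor
    · intro hgg hd; exact hgg (by omega)
    · intro hd hgg; exact hd (by omega)
  have hcond1 : ∀ i : ℤ, u i ≠ v i ↔ w i ≠ w (i + 1) := by
    intro i; rw [hwne, hGne]
  have hcond2 : ∀ i : ℤ, u i ≠ v i → w i = u i ∧ w (i + 1) = v i := by
    intro i hiuv
    have hsucc : (g u v i0) (i + 1) = (g u v i0) i + delta u v i := g_succ u v i0 i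
    rcases fin2_cases (u i) with h1 | h1 <;> rcases fin2_cases (v i) with h2 | h2
    · exact absurd (h1.trans h2.symm) hiuv
    · -- u i = 0, v i = 1, delta = 1
      have hd : delta u v i = 1 := by simp [delta, ind, h1, h2]
      have hgi : (g u v i0) i = m ∧ (g u v i0) (i + 1) = m + 1 := by
        rcases hrange i with hr | hr <;> rcases hrange (i+1) with hr2 | hr2 <;> omega
      exact ⟨((hwval i).1 hgi.1).trans h1.symm, ((hwval (i+1)).2 hgi.2).trans h2.symm⟩
    · -- u i = 1, v i = 0, delta = -1
      have hd : delta u v i = -1 := by simp [delta, ind, h1, h2]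
      have hgi : (g u v i0) i = m + 1 ∧ (g u v i0) (i + 1) = m := by
        rcases hrange i with hr | hr <;> rcases hrange (i+1) with hr2 | hr2 <;> omega
      exact ⟨((hwval i).2 hgi.1).trans h1.symm, ((hwval (i+1)).1 hgi.2).trans h2.symm⟩
    · exact absurd (h1.trans h2.symm) hiuv
  refine ⟨w, ⟨hcond1, hcond2⟩, ?_⟩
  rintro w' ⟨hc1, hc2⟩
  funext j
  -- both satisfy the same forward/backward recurrence and agree at i0
  have hbase : w' i0 = w i0 := by
    rw [(hc2 i0 hi0).1, (hcond2 i0 hi0).1]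
  have hfwd : ∀ k : ℤ, w' k = w k → w' (k + 1) = w (k + 1) := by
    intro k hk
    by_cases hk2 : u k = v k
    · have e1 : w' k = w' (k + 1) := by
        by_contra hne'
        exact (not_not.mpr hk2) ((hc1 k).mpr hne')
      have e2 : w k = w (k + 1) := by
        by_contra hne'
        exact (not_not.mpr hk2) ((hcond1 k).mpr hne')
      rw [← e1, ← e2, hk]
    · rw [(hc2 k hk2).2, (hcond2 k hk2).2]
  have hbwd : ∀ k : ℤ, w' (k + 1) = w (k + 1) → w' k = w k := by
    intro k hk
    by_cases hk2 : u k = v k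
    · have e1 : w' k = w' (k + 1) := by
        by_contra hne'
        exact (not_not.mpr hk2) ((hc1 k).mpr hne')
      have e2 : w k = w (k + 1) := by
        by_contra hne'
        exact (not_not.mpr hk2) ((hcond1 k).mpr hne')
      rw [e1, e2, hk]
    · rw [(hc2 k hk2).1, (hcond2 k hk2).1]
  have key : ∀ n : ℤ, w' (i0 + n) = w (i0 + n) := by
    intro n
    induction n using Int.induction_on with
    | zero => simpa using hbase
    | succ k ih =>
      have := hfwd (i0 + k) ih
      simpa [add_assoc] using this
    | pred k ih =>
      have := hbwd (i0 + (-k - 1)) (by rw [show i0 + (-k - 1) + 1 = i0 + (-k : ℤ) from by ring]; exact ih)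
      simpa using this
  have := key (j - i0)
  simpa [show i0 + (j - i0) = j from by ring] using this
end

section
/- Let B be a finite alphabet and suppose ũ : ℤ² → {0,1} × B × {0,1} satisfies: the first coordinate of each row is a Sturmian word, i.e., π₁(ũ(m,·)) = s_{α,ρ_m} for each m; and for all (m,n), π₃(ũ(m,n)) < π₃(ũ(m,n+1)) implies π₁(ũ(m,n)) = 0, and π₃(ũ(m,n)) > π₃(ũ(m,n+1)) implies π₁(ũ(m,n)) = 1. Define π(ũ)(m,n) = π₁(ũ(m,n)) if π₃(ũ(m,n)) = π₃(ũ(m,n+1)), and 1 − π₁(ũ(m,n)) otherwise. Then for every m, d(π(ũ)(m,·), s_{α,ρ_m}) ≤ 1 in the balance metric. -/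
/-- The factor map `π` sends `Z̃'_α` into `Z'_α`: every row of the image is at
balance distance at most one from the corresponding Sturmian word. -/
theorem factor_map_into_Zprime {B : Type*} [Fintype B] (α : ℝ) (ρ : ℤ → ℝ)
    (ut : ℤ → ℤ → Fin 2 × B × Fin 2)
    (h1 : ∀ m n : ℤ, (ut m n).1 = sturm (ρ m) α n)
    (h2 : ∀ m n : ℤ, (ut m n).2.2 < (ut m (n + 1)).2.2 → (ut m n).1 = 0)
    (h3 : ∀ m n : ℤ, (ut m (n + 1)).2.2 < (ut m n).2.2 → (ut m n).1 = 1) :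
    ∀ m : ℤ,
      distLE1
        (fun n => if (ut m n).2.2 = (ut m (n + 1)).2.2 then (ut m n).1 else 1 - (ut m n).1)
        (sturm (ρ m) α) := by
  intro m p q hpq
  have fin2 : ∀ i : Fin 2, i = 0 ∨ i = 1 := by decide
  set v : ℤ → Fin 2 :=
    fun n => if (ut m n).2.2 = (ut m (n + 1)).2.2 then (ut m n).1 else 1 - (ut m n).1 with hv
  have hzc : ∀ u : ℤ → Fin 2,
      zeroCount u p q = ∑ n ∈ Finset.Icc p q, (if u n = 0 then (1:ℤ) else 0) := by
    intro u
    unfold zeroCount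
    rw [Finset.card_filter]
    push_cast
    rfl
  have key : ∀ n : ℤ, (if v n = 0 then (1:ℤ) else 0) - (if sturm (ρ m) α n = 0 then 1 else 0)
      = ((ut m n).2.2.val : ℤ) - ((ut m (n+1)).2.2.val : ℤ) := by
    intro n
    have hs := h1 m n
    rcases fin2 ((ut m n).2.2) with ha | ha <;> rcases fin2 ((ut m (n+1)).2.2) with hb | hb
    · simp [hv, ha, hb, hs]
    · have hx : (ut m n).1 = 0 := h2 m n (by rw [ha, hb]; decide)
      have hst : sturm (ρ m) α n = 0 := by rw [← hs]; exact hx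
      simp [hv, ha, hb, hx, hst]
    · have hx : (ut m n).1 = 1 := h3 m n (by rw [ha, hb]; decide)
      have hst : sturm (ρ m) α n = 1 := by rw [← hs]; exact hx
      simp [hv, ha, hb, hx, hst]
    · simp [hv, ha, hb, hs]
  have tel : ∀ r : ℤ, p ≤ r →
      ∑ n ∈ Finset.Icc p r, (((ut m n).2.2.val : ℤ) - ((ut m (n+1)).2.2.val : ℤ))
        = ((ut m p).2.2.val : ℤ) - ((ut m (r+1)).2.2.val : ℤ) := by
    refine Int.le_induction ?_ ?_
    · simp
    · intro k hk ih
      have hins : Finset.Icc p (k + 1) = insert (k + 1) (Finset.Icc p k) := by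
        ext x
        simp only [Finset.mem_Icc, Finset.mem_insert]
        omega
      rw [hins, Finset.sum_insert (by simp), ih]
      ring
  rw [hzc, hzc, ← Finset.sum_sub_distrib,
    Finset.sum_congr rfl (fun n _ => key n), tel q hpq]
  have hp : ((ut m p).2.2).val < 2 := (ut m p).2.2.isLt
  have hq : ((ut m (q+1)).2.2).val < 2 := (ut m (q+1)).2.2.isLt
  rw [abs_le]
  omega
end

section
/- Let w : ℤ → {0,1} be any bi-infinite binary word and u : ℤ → {0,1}. Define v : ℤ → {0,1} by v(n) = u(n) if w(n) = w(n+1), and v(n) = 1 − u(n) if w(n) ≠ w(n+1), with the additional hypothesis that w(n)=0, w(n+1)=1 implies u(n)=0 and w(n)=1, w(n+1)=0 implies u(n)=1. Then d(u,v) ≤ 1 in the balance metric. -/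
lemma zeroCount_succ (u : ℤ → Fin 2) (p q : ℤ) (h : p ≤ q + 1) :
    zeroCount u p (q + 1) = zeroCount u p q + (if u (q + 1) = 0 then 1 else 0) := by
  unfold zeroCount
  rw [Icc_insert_top p q h, Finset.filter_insert]
  by_cases hu : u (q + 1) = 0 <;> simp [hu, Finset.card_insert_of_notMem, Finset.mem_filter]

/-- Flipping `u` exactly at the change positions of a binary word `w`, with the
compatibility conditions on types, produces a word at balance distance at most one
from `u`. -/
theorem distLE1_of_flip_coding (w u v : ℤ → Fin 2)
    (hv : ∀ n : ℤ, v n = if w n = w (n + 1) then u n else 1 - u n)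
    (h01 : ∀ n : ℤ, w n = 0 → w (n + 1) = 1 → u n = 0)
    (h10 : ∀ n : ℤ, w n = 1 → w (n + 1) = 0 → u n = 1) :
    distLE1 u v := by
  have fin2 : ∀ x : Fin 2, x = 0 ∨ x = 1 := by decide
  have point : ∀ n : ℤ,
      (if u n = 0 then (1:ℤ) else 0) - (if v n = 0 then 1 else 0)
        = ((w (n + 1)).val : ℤ) - ((w n).val : ℤ) := by
    intro n
    rw [hv n]
    rcases fin2 (w n) with hwn | hwn <;> rcases fin2 (w (n+1)) with hwn1 | hwn1 <;>
      simp [hwn, hwn1, h01 n, h10 n]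
  have key : ∀ p q : ℤ, p ≤ q →
      zeroCount u p q - zeroCount v p q = ((w (q + 1)).val : ℤ) - ((w p).val : ℤ) := by
    intro p q hpq
    refine Int.le_induction (motive := fun q _ => zeroCount u p q - zeroCount v p q = ((w (q + 1)).val : ℤ) - ((w p).val : ℤ)) ?_ ?_ q hpq
    ·
      have : zeroCount u p p - zeroCount v p p
          = (if u p = 0 then (1:ℤ) else 0) - (if v p = 0 then 1 else 0) := by
        unfold zeroCount
        by_cases hu : u p = 0 <;> by_cases hvp : v p = 0 <;>
          simp [hu, hvp, Finset.Icc_self, Finset.filter_singleton]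
      show zeroCount u p p - zeroCount v p p = _
      rw [this, point p]
    · intro q hq ih
      show zeroCount u p (q + 1) - zeroCount v p (q + 1) = _
      rw [zeroCount_succ u p q (by omega), zeroCount_succ v p q (by omega)]
      have := point (q + 1)
      omega
  intro p q hpq
  rw [key p q hpq]
  have h1 : ((w (q + 1)).val : ℤ) ≤ 1 := by omega
  have h2 : ((w p).val : ℤ) ≤ 1 := by omega
  have h3 : (0:ℤ) ≤ ((w (q + 1)).val : ℤ) := by positivity
  have h4 : (0:ℤ) ≤ ((w p).val : ℤ) := by positivity
  rw [abs_le]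
  omega
end
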